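/- Let Ω ⊂ ℝ² be a bounded open set with Lebesgue measure |Ω|, let 0 ≤ β ≤ 1/2 and 0 < λ₁ ≤ λ₂ be constants, and let g : [0,∞) → ℝ satisfy λ₁ ≤ g(s) ≤ λ₂(1+s)^β for all s ≥ 0. Let u : Ω → [0,∞) be measurable with ∫_Ω u = m < ∞, and let v : Ω → ℝ be differentiable with v, ‖∇v‖ ∈ L²(Ω), g(u)·v integrable, satisfying the integral identity ∫_Ω ‖∇v‖² + ∫_Ω v² = ∫_Ω g(u)·v. Then ∫_Ω ‖∇v‖² ≤ (λ₂²/4)(|Ω| + m). -/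

import Mathlib

open MeasureTheory

/-- Lemma 5.1: if `v` satisfies the weak identity
`∫_Ω ‖∇v‖² + ∫_Ω v² = ∫_Ω g(u) v` coming from `−Δv + v = g(u)` with
`λ₁ ≤ g(s) ≤ λ₂ (1+s)^β`, `0 ≤ β ≤ 1/2`, and `∫_Ω u = m`, then
`∫_Ω ‖∇v‖² ≤ (λ₂²/4)(|Ω| + m)`. -/
theorem stmt_10 (Ω : Set (EuclideanSpace ℝ (Fin 2)))
    (hΩo : IsOpen Ω) (hΩb : Bornology.IsBounded Ω)
    (β lam₁ lam₂ : ℝ) (hβ0 : 0 ≤ β) (hβ : β ≤ 1 / 2)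
    (hlam₁ : 0 < lam₁) (hlam : lam₁ ≤ lam₂)
    (g : ℝ → ℝ) (hg : ∀ s : ℝ, 0 ≤ s → lam₁ ≤ g s ∧ g s ≤ lam₂ * (1 + s) ^ β)
    (u : EuclideanSpace ℝ (Fin 2) → ℝ) (hu0 : ∀ x, 0 ≤ u x)
    (hum : Measurable u) (hui : IntegrableOn u Ω)
    (m : ℝ) (hm : ∫ x in Ω, u x = m)
    (v : EuclideanSpace ℝ (Fin 2) → ℝ) (hv : Differentiable ℝ v)
    (hv2 : IntegrableOn (fun x => (v x) ^ 2) Ω)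
    (hgrad2 : IntegrableOn (fun x => ‖fderiv ℝ v x‖ ^ 2) Ω)
    (hgv : IntegrableOn (fun x => g (u x) * v x) Ω)
    (hid : (∫ x in Ω, ‖fderiv ℝ v x‖ ^ 2) + ∫ x in Ω, (v x) ^ 2
            = ∫ x in Ω, g (u x) * v x) :
    ∫ x in Ω, ‖fderiv ℝ v x‖ ^ 2 ≤ (lam₂ ^ 2 / 4) * ((volume Ω).toReal + m) := by
  have hΩfin : volume Ω ≠ ⊤ := hΩb.measure_lt_top.ne
  have hlam₂ : 0 < lam₂ := lt_of_lt_of_le hlam₁ hlam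
  -- pointwise bound : g(u x) * v x - v x ^2 ≤ lam₂^2/4 * (1 + u x)
  have key : ∀ x, g (u x) * v x - (v x) ^ 2 ≤ lam₂ ^ 2 / 4 * (1 + u x) := by
    intro x
    have h1 : g (u x) * v x - (v x) ^ 2 ≤ g (u x) ^ 2 / 4 := by nlinarith [sq_nonneg (g (u x) - 2 * v x)]
    have hux := hu0 x
    obtain ⟨hgl, hgu⟩ := hg (u x) hux
    have hbase : (1:ℝ) ≤ 1 + u x := by linarith
    have h2 : g (u x) ^ 2 ≤ lam₂ ^ 2 * ((1 + u x) ^ β) ^ 2 := by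
      have hgnn : 0 ≤ g (u x) := le_of_lt (lt_of_lt_of_le hlam₁ hgl)
      have := mul_self_le_mul_self hgnn hgu
      calc g (u x) ^ 2 = g (u x) * g (u x) := sq (g (u x))
        _ ≤ (lam₂ * (1 + u x) ^ β) * (lam₂ * (1 + u x) ^ β) := this
        _ = lam₂ ^ 2 * ((1 + u x) ^ β) ^ 2 := by ring
    have h3 : ((1 + u x) ^ β) ^ 2 ≤ 1 + u x := by
      have : ((1 + u x) ^ β) ^ 2 = (1 + u x) ^ (β * 2) := by
        rw [← Real.rpow_natCast ((1 + u x) ^ β) 2, ← Real.rpow_mul (by linarith)]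
        norm_num
      rw [this]
      calc (1 + u x) ^ (β * 2) ≤ (1 + u x) ^ (1:ℝ) :=
            Real.rpow_le_rpow_of_exponent_le hbase (by linarith)
        _ = 1 + u x := Real.rpow_one _
    nlinarith [sq_nonneg lam₂]
  have hconst : IntegrableOn (fun _ : EuclideanSpace ℝ (Fin 2) => (1:ℝ)) Ω :=
    integrableOn_const hΩfin
  have hrhs : IntegrableOn (fun x => lam₂ ^ 2 / 4 * (1 + u x)) Ω := by
    exact ((hconst.add hui).const_mul _)
  have hlhs : IntegrableOn (fun x => g (u x) * v x - (v x) ^ 2) Ω := hgv.sub hv2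
  have hint : (∫ x in Ω, (g (u x) * v x - (v x) ^ 2))
      ≤ ∫ x in Ω, lam₂ ^ 2 / 4 * (1 + u x) :=
    setIntegral_mono hlhs hrhs key
  rw [integral_sub hgv hv2] at hint
  have hsplit : (∫ x in Ω, lam₂ ^ 2 / 4 * (1 + u x))
      = lam₂ ^ 2 / 4 * ((volume Ω).toReal + m) := by
    rw [integral_const_mul]
    congr 1
    rw [integral_add hconst hui, hm]
    simp [Measure.restrict_apply_univ, Measure.real]
  rw [hsplit] at hint
  linarith
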